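/- arXiv:1408.0523 — 9 statements merged into one kernel-verified Lean document; each statement's English description precedes it below -/
import Mathlib

section
/- Let U be a selfadjoint bounded operator on H1 and D : H1 → H2 a bounded operator. Then there exists a bounded operator W on H2 with U = D*WD if and only if there exists δ ≥ 0 such that -δ·D*D ≤ U ≤ δ·D*D. Moreover, if U = D*WD with W selfadjoint, then one can take δ = ‖W‖. -/
open ContinuousLinearMap Complex

noncomputable section

variable {H1 H2 : Type*}
  [NormedAddCommGroup H1] [InnerProductSpace ℂ H1] [CompleteSpace H1]
  [NormedAddCommGroup H2] [InnerProductSpace ℂ H2] [CompleteSpace H2]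

/-- Real part of an operator. -/
def reOp {H : Type*} [NormedAddCommGroup H] [InnerProductSpace ℂ H] [CompleteSpace H]
    (T : H →L[ℂ] H) : H →L[ℂ] H := (2 : ℂ)⁻¹ • (T + adjoint T)

/-- Imaginary part of an operator. -/
def imOp {H : Type*} [NormedAddCommGroup H] [InnerProductSpace ℂ H] [CompleteSpace H]
    (T : H →L[ℂ] H) : H →L[ℂ] H := (2 * Complex.I : ℂ)⁻¹ • (T - adjoint T)

/-- The defect operator `D_C = (I - C*C)^{1/2}` (positive square root). -/
def defect {Ha Hb : Type*} [NormedAddCommGroup Ha] [InnerProductSpace ℂ Ha] [CompleteSpace Ha]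
    [NormedAddCommGroup Hb] [InnerProductSpace ℂ Hb] [CompleteSpace Hb]
    (C : Ha →L[ℂ] Hb) : Ha →L[ℂ] Ha := CFC.sqrt (1 - adjoint C ∘L C)

local notation "⟪" x ", " y "⟫" => @inner ℂ _ _ x y
/-- Factorization through the closure of the range. -/
lemma factor_through (R : H1 →L[ℂ] H1) (D : H1 →L[ℂ] H2) (c : ℝ)
    (h : ∀ x, ‖R x‖ ≤ c * ‖D x‖) : ∃ C : H2 →L[ℂ] H1, C ∘L D = R := by
  set Dl : H1 →ₗ[ℂ] H2 := (D : H1 →ₗ[ℂ] H2) with hDl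
  have hker : LinearMap.ker Dl ≤ LinearMap.ker (R : H1 →ₗ[ℂ] H1) := by
    intro x hx
    have hx' : D x = 0 := hx
    have := h x
    rw [hx', norm_zero, mul_zero] at this
    simpa [LinearMap.mem_ker] using norm_le_zero_iff.mp this
  set p : Submodule ℂ H2 := LinearMap.range Dl with hp
  set f₀ : p →ₗ[ℂ] H1 :=
    ((LinearMap.ker Dl).liftQ (R : H1 →ₗ[ℂ] H1) hker) ∘ₗ
      (Dl.quotKerEquivRange.symm : p →ₗ[ℂ] (H1 ⧸ LinearMap.ker Dl)) with hf₀
  have key : ∀ (x : H1) (hx : D x ∈ p), f₀ ⟨D x, hx⟩ = R x := by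
    intro x hx
    have h1 : Dl.quotKerEquivRange.symm ⟨Dl x, hx⟩ = (LinearMap.ker Dl).mkQ x :=
      Dl.quotKerEquivRange_symm_apply_image x hx
    simp only [hf₀, LinearMap.coe_comp, Function.comp_apply, LinearEquiv.coe_coe]
    erw [h1]
    simp
  have bound : ∀ z : p, ‖f₀ z‖ ≤ c * ‖z‖ := by
    rintro ⟨z, hz⟩
    obtain ⟨x, rfl⟩ := hz
    show ‖f₀ ⟨D x, ⟨x, rfl⟩⟩‖ ≤ c * ‖D x‖
    rw [key x ⟨x, rfl⟩]
    exact h x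
  set F : p →L[ℂ] H1 := f₀.mkContinuous c bound with hF
  set K : Submodule ℂ H2 := p.topologicalClosure with hK
  haveI : CompleteSpace K := (Submodule.isClosed_topologicalClosure p).completeSpace_coe
  have hle : p ≤ K := Submodule.le_topologicalClosure p
  set jl : p →ₗ[ℂ] K := Submodule.inclusion hle with hjl
  have jnorm : ∀ z : p, ‖jl z‖ = ‖z‖ := fun z => rfl
  set j : p →L[ℂ] K := jl.mkContinuous 1 (fun z => by rw [jnorm, one_mul]) with hj
  have h_e : IsUniformInducing j := by
    have : Isometry j := AddMonoidHomClass.isometry_of_norm j (fun z => jnorm z)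
    exact this.isUniformInducing
  have h_dense : DenseRange j := by
    intro y
    have hy : (y : H2) ∈ closure (p : Set H2) := by
      rw [← Submodule.topologicalClosure_coe]
      exact y.2
    rw [mem_closure_iff_seq_limit] at hy
    obtain ⟨u, hu, hlim⟩ := hy
    have htend : Filter.Tendsto (fun n => j ⟨u n, hu n⟩) Filter.atTop (nhds y) := by
      rw [tendsto_subtype_rng]
      exact hlim
    exact mem_closure_of_tendsto htend
      (Filter.Eventually.of_forall fun n => Set.mem_range_self _)
  set G : K →L[ℂ] H1 := F.extend j with hG
  refine ⟨G ∘L (K.orthogonalProjectionOnto), ?_⟩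
  ext x
  have hmem : D x ∈ K := hle ⟨x, rfl⟩
  have hproj : K.orthogonalProjectionOnto (D x) = ⟨D x, hmem⟩ := by
    exact K.orthogonalProjectionOnto_mem_subspace_eq_self (⟨D x, hmem⟩ : K)
  have hjx : j ⟨D x, ⟨x, rfl⟩⟩ = (⟨D x, hmem⟩ : K) := rfl
  calc (G ∘L (K.orthogonalProjectionOnto) ∘L D) x = G (K.orthogonalProjectionOnto (D x)) := rfl
    _ = G (j ⟨D x, ⟨x, rfl⟩⟩) := by rw [hproj, hjx]
    _ = F ⟨D x, ⟨x, rfl⟩⟩ := by rw [hG, ContinuousLinearMap.extend_eq _ h_dense h_e]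
    _ = R x := key x ⟨x, rfl⟩

local notation "R𝕜" => RCLike.re (K := ℂ)

lemma le_iff_re_inner (X Y : H1 →L[ℂ] H1) (hX : IsSelfAdjoint X) (hY : IsSelfAdjoint Y) :
    X ≤ Y ↔ ∀ x, R𝕜 ⟪X x, x⟫ ≤ R𝕜 ⟪Y x, x⟫ := by
  rw [ContinuousLinearMap.le_def]
  constructor
  · intro hpos x
    have := hpos.2 x
    simp only [reApplyInnerSelf_apply, sub_apply, inner_sub_left, map_sub] at this
    linarith
  · intro hx
    refine ⟨(hY.sub hX).isSymmetric, fun x => ?_⟩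
    simp only [reApplyInnerSelf_apply, sub_apply, inner_sub_left, map_sub]
    linarith [hx x]

lemma re_inner_T (D : H1 →L[ℂ] H2) (x : H1) :
    R𝕜 ⟪(adjoint D ∘L D) x, x⟫ = ‖D x‖ ^ 2 := by
  rw [comp_apply, adjoint_inner_left, inner_self_eq_norm_sq]

lemma hT_sa (D : H1 →L[ℂ] H2) : IsSelfAdjoint (adjoint D ∘L D) := by
  rw [IsSelfAdjoint, star_eq_adjoint, adjoint_comp, adjoint_adjoint]

lemma re_inner_smulT (D : H1 →L[ℂ] H2) (δ : ℝ) (x : H1) :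
    R𝕜 ⟪((δ : ℂ) • (adjoint D ∘L D)) x, x⟫ = δ * ‖D x‖ ^ 2 := by
  rw [smul_apply, inner_smul_left, Complex.conj_ofReal]
  rw [show R𝕜 ((δ:ℂ) * ⟪(adjoint D ∘L D) x, x⟫) =
    δ * R𝕜 ⟪(adjoint D ∘L D) x, x⟫ from Complex.re_ofReal_mul _ _, re_inner_T]

lemma re_inner_neg (X : H1 →L[ℂ] H1) (x : H1) :
    R𝕜 ⟪(-X) x, x⟫ = -R𝕜 ⟪X x, x⟫ := by
  simp

lemma douglas (A : H1 →L[ℂ] H1) (D : H1 →L[ℂ] H2) (δ : ℝ) (hδ : 0 ≤ δ)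
    (hA0 : 0 ≤ A) (hle : ∀ x, R𝕜 ⟪A x, x⟫ ≤ δ * ‖D x‖ ^ 2) :
    ∃ C : H2 →L[ℂ] H1, adjoint D ∘L ((adjoint C ∘L C) ∘L D) = A := by
  set R : H1 →L[ℂ] H1 := CFC.sqrt A with hR
  have hR0 : 0 ≤ R := CFC.sqrt_nonneg A
  have hRsa : IsSelfAdjoint R := IsSelfAdjoint.of_nonneg hR0
  have hRR : R ∘L R = A := by
    have := CFC.sqrt_mul_sqrt_self A hA0
    rwa [ContinuousLinearMap.mul_def] at this
  have hnorm : ∀ x, ‖R x‖ ≤ Real.sqrt δ * ‖D x‖ := by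
    intro x
    have h1 : R𝕜 ⟪A x, x⟫ = ‖R x‖ ^ 2 := by
      rw [← hRR, comp_apply]
      nth_rewrite 1 [← hRsa.adjoint_eq]
      rw [adjoint_inner_left, inner_self_eq_norm_sq]
    have h2 : ‖R x‖ ^ 2 ≤ (Real.sqrt δ * ‖D x‖) ^ 2 := by
      rw [mul_pow, Real.sq_sqrt hδ, ← h1]
      exact hle x
    calc ‖R x‖ = Real.sqrt (‖R x‖ ^ 2) := (Real.sqrt_sq (norm_nonneg _)).symm
      _ ≤ Real.sqrt ((Real.sqrt δ * ‖D x‖) ^ 2) := Real.sqrt_le_sqrt h2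
      _ = Real.sqrt δ * ‖D x‖ := Real.sqrt_sq (by positivity)
  obtain ⟨C, hC⟩ := factor_through R D (Real.sqrt δ) hnorm
  refine ⟨C, ?_⟩
  have h2 : adjoint D ∘L ((adjoint C ∘L C) ∘L D) = adjoint (C ∘L D) ∘L (C ∘L D) := by
    rw [adjoint_comp]
    ext x
    rfl
  rw [h2, hC, hRsa.adjoint_eq, hRR]

lemma re_coe_mul (r : ℝ) (z : ℂ) : R𝕜 ((r : ℂ) * z) = r * R𝕜 z := by
  simp [RCLike.re_to_complex]

lemma sa_real_smul (T : H1 →L[ℂ] H1) (hT : IsSelfAdjoint T) (r : ℝ) :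
    IsSelfAdjoint ((r : ℂ) • T) := by
  rw [IsSelfAdjoint, star_smul, hT.star_eq, Complex.star_def, Complex.conj_ofReal]

set_option maxHeartbeats 1000000 in
theorem stmt2 (U : H1 →L[ℂ] H1) (hU : IsSelfAdjoint U) (D : H1 →L[ℂ] H2) :
    ((∃ W : H2 →L[ℂ] H2, U = adjoint D ∘L W ∘L D) ↔
      ∃ δ : ℝ, 0 ≤ δ ∧
        -((δ : ℂ) • (adjoint D ∘L D)) ≤ U ∧ U ≤ (δ : ℂ) • (adjoint D ∘L D)) ∧
    (∀ W : H2 →L[ℂ] H2, IsSelfAdjoint W → U = adjoint D ∘L W ∘L D →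
      -((‖W‖ : ℂ) • (adjoint D ∘L D)) ≤ U ∧ U ≤ (‖W‖ : ℂ) • (adjoint D ∘L D)) := by
  have main2 : ∀ W : H2 →L[ℂ] H2, IsSelfAdjoint W → U = adjoint D ∘L W ∘L D →
      -((‖W‖ : ℂ) • (adjoint D ∘L D)) ≤ U ∧ U ≤ (‖W‖ : ℂ) • (adjoint D ∘L D) := by
    intro W hW hUW
    have hsm : IsSelfAdjoint ((‖W‖ : ℂ) • (adjoint D ∘L D)) :=
      sa_real_smul _ (hT_sa D) _
    have key : ∀ x, |R𝕜 ⟪U x, x⟫| ≤ ‖W‖ * ‖D x‖ ^ 2 := by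
      intro x
      have hx : ⟪U x, x⟫ = ⟪W (D x), D x⟫ := by
        rw [hUW]
        simp only [comp_apply]
        rw [adjoint_inner_left]
      calc |R𝕜 ⟪U x, x⟫| ≤ ‖⟪U x, x⟫‖ := RCLike.abs_re_le_norm _
        _ = ‖⟪W (D x), D x⟫‖ := by rw [hx]
        _ ≤ ‖W (D x)‖ * ‖D x‖ := norm_inner_le_norm _ _
        _ ≤ (‖W‖ * ‖D x‖) * ‖D x‖ := by
            have := W.le_opNorm (D x)
            nlinarith [norm_nonneg (D x)]
        _ = ‖W‖ * ‖D x‖ ^ 2 := by ring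
    constructor
    · rw [le_iff_re_inner _ _ hsm.neg hU]
      intro x
      rw [re_inner_neg, re_inner_smulT]
      have h1 := key x
      have h2 := neg_abs_le (R𝕜 ⟪U x, x⟫)
      linarith
    · rw [le_iff_re_inner _ _ hU hsm]
      intro x
      rw [re_inner_smulT]
      have h1 := key x
      have h2 := le_abs_self (R𝕜 ⟪U x, x⟫)
      linarith
  refine ⟨⟨?_, ?_⟩, main2⟩
  · rintro ⟨W, hUW⟩
    set W' : H2 →L[ℂ] H2 := (2 : ℂ)⁻¹ • (W + adjoint W) with hW'def
    have hW' : IsSelfAdjoint W' := by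
      rw [IsSelfAdjoint, hW'def, star_smul, star_add, star_eq_adjoint, star_eq_adjoint,
        adjoint_adjoint, show star ((2 : ℂ)⁻¹) = (2 : ℂ)⁻¹ by simp, add_comm]
    have hUadj : adjoint D ∘L (adjoint W ∘L D) = U := by
      have h1 : adjoint U = adjoint D ∘L (adjoint W ∘L D) := by
        rw [hUW]
        ext x
        simp [adjoint_comp, adjoint_adjoint]
      rw [← h1, hU.adjoint_eq]
    have hU' : U = adjoint D ∘L W' ∘L D := by
      rw [hW'def]
      calc U = (2 : ℂ)⁻¹ • (U + U) := by
            rw [← two_smul ℂ U, smul_smul]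
            norm_num
        _ = (2 : ℂ)⁻¹ • ((adjoint D ∘L W ∘L D) + (adjoint D ∘L (adjoint W ∘L D))) := by
            rw [← hUW, hUadj]
        _ = adjoint D ∘L ((2 : ℂ)⁻¹ • (W + adjoint W)) ∘L D := by
            ext x
            simp [comp_apply, smul_apply, add_apply, map_add, map_smul]
    exact ⟨‖W'‖, norm_nonneg _, main2 W' hW' hU'⟩
  · rintro ⟨δ, hδ, hL, hR⟩
    have hδT_sa : IsSelfAdjoint ((δ : ℂ) • (adjoint D ∘L D)) :=
      sa_real_smul _ (hT_sa D) _
    have hLre := (le_iff_re_inner _ _ hδT_sa.neg hU).mp hL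
    have hRre := (le_iff_re_inner _ _ hU hδT_sa).mp hR
    have hLre' : ∀ x, -(δ * ‖D x‖ ^ 2) ≤ R𝕜 ⟪U x, x⟫ := by
      intro x
      have := hLre x
      rwa [re_inner_neg, re_inner_smulT] at this
    have hRre' : ∀ x, R𝕜 ⟪U x, x⟫ ≤ δ * ‖D x‖ ^ 2 := by
      intro x
      have := hRre x
      rwa [re_inner_smulT] at this
    set A : H1 →L[ℂ] H1 := ((2⁻¹ : ℝ) : ℂ) • ((δ : ℂ) • (adjoint D ∘L D) + U) with hAdef
    set B : H1 →L[ℂ] H1 := ((2⁻¹ : ℝ) : ℂ) • ((δ : ℂ) • (adjoint D ∘L D) - U) with hBdef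
    have hA_sa : IsSelfAdjoint A := sa_real_smul _ (hδT_sa.add hU) _
    have hB_sa : IsSelfAdjoint B := sa_real_smul _ (hδT_sa.sub hU) _
    have hAre : ∀ x, R𝕜 ⟪A x, x⟫ = 2⁻¹ * (δ * ‖D x‖ ^ 2 + R𝕜 ⟪U x, x⟫) := by
      intro x
      rw [hAdef, smul_apply, inner_smul_left, Complex.conj_ofReal, re_coe_mul,
        add_apply, inner_add_left, map_add, re_inner_smulT]
    have hBre : ∀ x, R𝕜 ⟪B x, x⟫ = 2⁻¹ * (δ * ‖D x‖ ^ 2 - R𝕜 ⟪U x, x⟫) := by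
      intro x
      rw [hBdef, smul_apply, inner_smul_left, Complex.conj_ofReal, re_coe_mul,
        sub_apply, inner_sub_left, map_sub, re_inner_smulT]
    have hzero : ∀ x : H1, R𝕜 ⟪(0 : H1 →L[ℂ] H1) x, x⟫ = 0 := by
      intro x
      simp
    have hA0 : 0 ≤ A := by
      rw [le_iff_re_inner _ _ (IsSelfAdjoint.zero _) hA_sa]
      intro x
      rw [hzero, hAre]
      have := hLre' x
      linarith
    have hB0 : 0 ≤ B := by
      rw [le_iff_re_inner _ _ (IsSelfAdjoint.zero _) hB_sa]
      intro x
      rw [hzero, hBre]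
      have := hRre' x
      linarith
    have hAle : ∀ x, R𝕜 ⟪A x, x⟫ ≤ δ * ‖D x‖ ^ 2 := by
      intro x
      rw [hAre]
      have := hRre' x
      linarith
    have hBle : ∀ x, R𝕜 ⟪B x, x⟫ ≤ δ * ‖D x‖ ^ 2 := by
      intro x
      rw [hBre]
      have := hLre' x
      linarith
    obtain ⟨CA, hCA⟩ := douglas A D δ hδ hA0 hAle
    obtain ⟨CB, hCB⟩ := douglas B D δ hδ hB0 hBle
    refine ⟨adjoint CA ∘L CA - adjoint CB ∘L CB, ?_⟩
    have hAB : A - B = U := by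
      ext x
      rw [hAdef, hBdef]
      simp only [sub_apply, smul_apply, add_apply]
      module
    calc U = A - B := hAB.symm
      _ = adjoint D ∘L ((adjoint CA ∘L CA) ∘L D) - adjoint D ∘L ((adjoint CB ∘L CB) ∘L D) := by
          rw [hCA, hCB]
      _ = adjoint D ∘L (adjoint CA ∘L CA - adjoint CB ∘L CB) ∘L D := by
          ext x
          simp [comp_apply, sub_apply, map_sub]
end
end

section
/- Let A, B be contractions from H1 to H2 and suppose I - A*B = D_B Y D_B for some bounded operator Y on H1 (where D_B = (I - B*B)^{1/2}). Then 2Re(Y)' := D_B(2Re(Y) - I)D_B = D_A² + (A - B)*(A - B) ≥ 0; in particular D_B(2Re(Y) - I)D_B is positive semidefinite. -/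
open ContinuousLinearMap Complex

noncomputable section

variable {H1 H2 : Type*}
  [NormedAddCommGroup H1] [InnerProductSpace ℂ H1] [CompleteSpace H1]
  [NormedAddCommGroup H2] [InnerProductSpace ℂ H2] [CompleteSpace H2]

lemma one_sub_adj_self_pos (A : H1 →L[ℂ] H2) (hA : ‖A‖ ≤ 1) :
    (1 - adjoint A ∘L A : H1 →L[ℂ] H1).IsPositive := by
  constructor
  · rw [← isSelfAdjoint_iff_isSymmetric, IsSelfAdjoint, star_sub, star_one]
    congr 1
    rw [star_eq_adjoint, adjoint_comp, adjoint_adjoint]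
  · intro x
    have h : reApplyInnerSelf (1 - adjoint A ∘L A) x = ‖x‖ ^ 2 - ‖A x‖ ^ 2 := by
      simp only [reApplyInnerSelf, sub_apply, one_apply, comp_apply, inner_sub_left, map_sub,
        adjoint_inner_left]
      rw [inner_self_eq_norm_sq, ContinuousLinearMap.one_apply, @inner_self_eq_norm_sq ℂ]
    rw [h]
    have : ‖A x‖ ≤ ‖x‖ := (A.le_opNorm x).trans (by nlinarith [norm_nonneg x])
    nlinarith [norm_nonneg (A x)]

theorem stmt4 (A B : H1 →L[ℂ] H2) (hA : ‖A‖ ≤ 1) (hB : ‖B‖ ≤ 1)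
    (DB : H1 →L[ℂ] H1) (hDBpos : 0 ≤ DB) (hDBsq : DB ∘L DB = 1 - adjoint B ∘L B)
    (Y : H1 →L[ℂ] H1) (hY : 1 - adjoint A ∘L B = DB ∘L Y ∘L DB) :
    DB ∘L ((2 : ℂ) • reOp Y - 1) ∘L DB
        = (1 - adjoint A ∘L A) + adjoint (A - B) ∘L (A - B) ∧
      0 ≤ DB ∘L ((2 : ℂ) • reOp Y - 1) ∘L DB := by
  have hDBsa : IsSelfAdjoint DB := ((nonneg_iff_isPositive DB).mp hDBpos).isSelfAdjoint
  have hadj : DB ∘L adjoint Y ∘L DB = 1 - adjoint B ∘L A := by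
    have := congrArg ContinuousLinearMap.adjoint hY
    have h1 : adjoint (1 : H1 →L[ℂ] H1) = 1 := by rw [← star_eq_adjoint, star_one]
    rw [map_sub, h1, adjoint_comp, adjoint_adjoint] at this
    rw [this, adjoint_comp, adjoint_comp, hDBsa.adjoint_eq, comp_assoc]
  have key : DB ∘L ((2 : ℂ) • reOp Y - 1) ∘L DB
      = (1 - adjoint A ∘L A) + adjoint (A - B) ∘L (A - B) := by
    have hexp : (2 : ℂ) • reOp Y - 1 = Y + adjoint Y - 1 := by
      rw [reOp, smul_smul]
      norm_num
    rw [hexp]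
    have e1 : DB ∘L (Y + adjoint Y - 1) ∘L DB
        = DB ∘L Y ∘L DB + DB ∘L adjoint Y ∘L DB - DB ∘L DB := by
      ext x; simp [comp_apply, add_apply, sub_apply, map_add, map_sub]
    rw [e1, ← hY, hadj, hDBsq]
    ext x
    simp only [sub_apply, add_apply, one_apply, comp_apply, map_sub, adjoint_comp,
      map_sub, ContinuousLinearMap.sub_apply]
    abel
  refine ⟨key, ?_⟩
  rw [key, nonneg_iff_isPositive]
  exact (one_sub_adj_self_pos A hA).add (by simpa [ContinuousLinearMap.one_def] using isPositive_one.adjoint_conj (A - B))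
end
end

section
/- Let A, B be contractions from H1 to H2 with I - A*B = D_B Y D_B for a bounded operator Y, and let x ∈ H1 satisfy D_B(2Re(Y) - I)D_B x = 0 and x ∈ closure(Ran D_B). Then x = 0. -/
open ContinuousLinearMap Complex

noncomputable section

variable {H1 H2 : Type*}
  [NormedAddCommGroup H1] [InnerProductSpace ℂ H1] [CompleteSpace H1]
  [NormedAddCommGroup H2] [InnerProductSpace ℂ H2] [CompleteSpace H2]

set_option maxHeartbeats 1000000 in
theorem stmt5 (A B : H1 →L[ℂ] H2) (hA : ‖A‖ ≤ 1) (hB : ‖B‖ ≤ 1)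
    (DB : H1 →L[ℂ] H1) (hDBpos : 0 ≤ DB) (hDBsq : DB ∘L DB = 1 - adjoint B ∘L B)
    (Y : H1 →L[ℂ] H1) (hY : 1 - adjoint A ∘L B = DB ∘L Y ∘L DB)
    (x : H1) (hx : (DB ∘L ((2 : ℂ) • reOp Y - 1) ∘L DB) x = 0)
    (hxr : x ∈ closure (Set.range DB)) : x = 0 := by
  have hSA : IsSelfAdjoint DB := ((nonneg_iff_isPositive DB).mp hDBpos).isSelfAdjoint
  have hDBadj : adjoint DB = DB := hSA
  have hY' : 1 - adjoint B ∘L A = DB ∘L adjoint Y ∘L DB := by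
    have := congrArg adjoint hY
    simpa [adjoint_comp, hDBadj, comp_assoc, one_def, adjoint_id, map_sub] using this
  have hkey : DB ∘L ((2 : ℂ) • reOp Y - 1) ∘L DB
      = (1 - adjoint A ∘L A) + adjoint (A - B) ∘L (A - B) := by
    have h2 : (2 : ℂ) • reOp Y = Y + adjoint Y := by
      simp [reOp, smul_smul]
    rw [h2]
    have e1 : DB ∘L ((Y + adjoint Y - 1)) ∘L DB
        = DB ∘L Y ∘L DB + DB ∘L adjoint Y ∘L DB - DB ∘L DB := by
      simp [comp_add, add_comp, comp_sub, sub_comp, comp_assoc, one_def]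
    rw [e1, ← hY, ← hY', hDBsq]
    simp only [map_sub, sub_comp, comp_sub]
    abel
  have hin : (‖x‖ ^ 2 - ‖A x‖ ^ 2) + ‖(A - B) x‖ ^ 2 = 0 := by
    have h0 : (inner ℂ x ((DB ∘L ((2 : ℂ) • reOp Y - 1) ∘L DB) x) : ℂ) = 0 := by
      rw [hx]; simp
    rw [hkey] at h0
    have hsum : (inner ℂ x ((1 - adjoint A ∘L A) x) : ℂ)
        + (inner ℂ x ((adjoint (A - B) ∘L (A - B)) x) : ℂ) = 0 := by
      rw [← inner_add_right]; exact h0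
    have h1 : (inner ℂ x ((1 - adjoint A ∘L A) x) : ℂ)
        = (inner ℂ x x : ℂ) - inner ℂ (A x) (A x) := by
      simp [sub_apply, inner_sub_right, comp_apply, adjoint_inner_right]
    have h2 : (inner ℂ x ((adjoint (A - B) ∘L (A - B)) x) : ℂ)
        = inner ℂ ((A - B) x) ((A - B) x) := by
      simp only [comp_apply, map_sub, sub_apply, inner_sub_right, inner_sub_left, adjoint_inner_right]
    rw [h1, h2] at hsum
    have h3 := congrArg RCLike.re hsum
    rw [map_add, map_sub, inner_self_eq_norm_sq, inner_self_eq_norm_sq,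
      inner_self_eq_norm_sq] at h3
    simpa using h3
  have hAx : ‖A x‖ ≤ ‖x‖ := by
    calc ‖A x‖ ≤ ‖A‖ * ‖x‖ := A.le_opNorm x
    _ ≤ 1 * ‖x‖ := by gcongr
    _ = ‖x‖ := one_mul _
  have hterm1 : ‖x‖ ^ 2 - ‖A x‖ ^ 2 = 0 ∧ ‖(A - B) x‖ ^ 2 = 0 := by
    constructor <;> nlinarith [sq_nonneg ‖(A - B) x‖, norm_nonneg (A x), norm_nonneg x]
  have hAB : A x = B x := by
    have h : ‖(A - B) x‖ = 0 := by
      have e := hterm1.2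
      simpa [abs_norm] using (sq_eq_sq_iff_abs_eq_abs ‖(A - B) x‖ 0).mp (by simpa using e)
    have : (A - B) x = 0 := norm_eq_zero.mp h
    simpa [sub_apply, sub_eq_zero] using this
  have hnormB : ‖B x‖ = ‖x‖ := by
    have h1 : ‖A x‖ = ‖x‖ := by
      have e : ‖A x‖ ^ 2 = ‖x‖ ^ 2 := by linarith [hterm1.1]
      have := (sq_eq_sq_iff_abs_eq_abs ‖A x‖ ‖x‖).mp e
      simpa [abs_norm] using this
    rw [← hAB, h1]
  have hDBx : DB x = 0 := by
    have h3 : (inner ℂ (DB x) (DB x) : ℂ) = inner ℂ x x - inner ℂ (B x) (B x) := by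
      have hsym := isSelfAdjoint_iff_isSymmetric.mp hSA
      calc (inner ℂ (DB x) (DB x) : ℂ) = inner ℂ x ((DB ∘L DB) x) := by
            rw [comp_apply]; exact hsym x (DB x)
      _ = inner ℂ x x - inner ℂ (B x) (B x) := by
            rw [hDBsq]
            simp only [sub_apply, one_apply, ContinuousLinearMap.one_apply, inner_sub_right, comp_apply, adjoint_inner_right]
    have h4 := congrArg RCLike.re h3
    rw [map_sub, inner_self_eq_norm_sq, inner_self_eq_norm_sq, inner_self_eq_norm_sq,
      hnormB] at h4
    have h5 : ‖DB x‖ ^ 2 = 0 := by rw [h4]; ring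
    have : ‖DB x‖ = 0 := by
      simpa [abs_norm] using (sq_eq_sq_iff_abs_eq_abs ‖DB x‖ 0).mp (by simpa using h5)
    exact norm_eq_zero.mp this
  have hperp : closure (Set.range DB) ⊆ {y | (inner ℂ x y : ℂ) = 0} := by
    apply closure_minimal
    · rintro _ ⟨z, rfl⟩
      have hsym := isSelfAdjoint_iff_isSymmetric.mp hSA
      show (inner ℂ x (DB z) : ℂ) = 0
      simpa [hDBx] using (hsym x z).symm
    · exact isClosed_eq (continuous_const.inner continuous_id) continuous_const
  exact inner_self_eq_zero.mp (hperp hxr)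
end
end

section
/- Let A, B be contractions from H1 to H2 such that A - B = D_{B*} X D_B for some bounded operator X : H1 → H2 (Shmul'yan relation A ≺ B). Then I - A*B = D_B Y D_B holds with Y = I - X*B, and ‖Y‖ ≤ 1 + ‖X‖. -/
open ContinuousLinearMap Complex

noncomputable section

variable {H1 H2 : Type*}
  [NormedAddCommGroup H1] [InnerProductSpace ℂ H1] [CompleteSpace H1]
  [NormedAddCommGroup H2] [InnerProductSpace ℂ H2] [CompleteSpace H2]

set_option synthInstance.maxHeartbeats 1000000 in
set_option maxHeartbeats 1000000 in
lemma myIsClosed_centralizer {A : Type*} [Ring A] [Algebra ℂ A] [StarRing A] [StarModule ℂ A]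
    [TopologicalSpace A] [T2Space A] [IsTopologicalRing A] (s : Set A) :
    IsClosed ((StarSubalgebra.centralizer ℂ s : StarSubalgebra ℂ A) : Set A) := by
  rw [StarSubalgebra.coe_centralizer]
  have h : (s ∪ star s).centralizer = ⋂ g ∈ (s ∪ star s), {z | g * z = z * g} := by
    ext z
    simp [Set.mem_centralizer_iff]
  rw [h]
  exact isClosed_biInter fun g _ =>
    isClosed_eq (continuous_const.mul continuous_id) (continuous_id.mul continuous_const)

lemma my_cfc_mem_elemental {A : Type*} [CStarAlgebra A] (a : A) [IsStarNormal a] (f : ℂ → ℂ) :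
    cfc f a ∈ StarAlgebra.elemental ℂ a := by
  by_cases h : ContinuousOn f (spectrum ℂ a)
  · rw [cfc_apply f a, cfcHom_eq_of_isStarNormal]
    exact SetLike.coe_mem _
  · rw [cfc_apply_of_not_continuousOn a h]
    exact zero_mem _

set_option synthInstance.maxHeartbeats 1000000 in
set_option maxHeartbeats 1000000 in
lemma my_commute_sqrt {E : Type*} [NormedAddCommGroup E] [InnerProductSpace ℂ E] [CompleteSpace E]
    (a b : E →L[ℂ] E) (ha : 0 ≤ a) (h : b * a = a * b) :
    b * CFC.sqrt a = CFC.sqrt a * b := by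
  have hsa : IsSelfAdjoint a := IsSelfAdjoint.of_nonneg ha
  have hnorm : IsStarNormal a := hsa.isStarNormal
  have h2 : CFC.sqrt a = cfc (fun x : ℂ => ((NNReal.sqrt x.re.toNNReal : ℝ) : ℂ)) a := by
    rw [CFC.sqrt_eq_cfc, cfc_nnreal_eq_real _ _ ha, cfc_real_eq_complex _ hsa]
  have hcent : a ∈ StarSubalgebra.centralizer ℂ ({b} : Set (E →L[ℂ] E)) := by
    rw [StarSubalgebra.mem_centralizer_iff]
    intro g hg
    rw [Set.mem_singleton_iff] at hg
    subst hg
    refine ⟨h, ?_⟩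
    have := congrArg star h
    simpa [star_mul, hsa.star_eq] using this.symm
  have hle := StarAlgebra.elemental.le_of_mem (myIsClosed_centralizer ({b} : Set (E →L[ℂ] E))) hcent
  have hmem := hle (my_cfc_mem_elemental a (fun x : ℂ => ((NNReal.sqrt x.re.toNNReal : ℝ) : ℂ)))
  rw [StarSubalgebra.mem_centralizer_iff] at hmem
  rw [h2]
  exact (hmem b (Set.mem_singleton b)).1

set_option maxHeartbeats 1000000 in
set_option synthInstance.maxHeartbeats 1000000 in
theorem stmt6 (A B : H1 →L[ℂ] H2) (hA : ‖A‖ ≤ 1) (hB : ‖B‖ ≤ 1)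
    (DB : H1 →L[ℂ] H1) (hDBpos : 0 ≤ DB) (hDBsq : DB ∘L DB = 1 - adjoint B ∘L B)
    (DBs : H2 →L[ℂ] H2) (hDBspos : 0 ≤ DBs) (hDBssq : DBs ∘L DBs = 1 - B ∘L adjoint B)
    (X : H1 →L[ℂ] H2) (hX : A - B = DBs ∘L X ∘L DB) :
    1 - adjoint A ∘L B = DB ∘L (1 - adjoint X ∘L B) ∘L DB ∧
      ‖(1 : H1 →L[ℂ] H1) - adjoint X ∘L B‖ ≤ 1 + ‖X‖ := by
  have hDBp : DB.IsPositive := (ContinuousLinearMap.nonneg_iff_isPositive DB).mp hDBpos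
  have hDBsp : DBs.IsPositive := (ContinuousLinearMap.nonneg_iff_isPositive DBs).mp hDBspos
  have hDBsa : adjoint DB = DB := isSelfAdjoint_iff'.mp hDBp.isSelfAdjoint
  have hDBssa : adjoint DBs = DBs := isSelfAdjoint_iff'.mp hDBsp.isSelfAdjoint
  -- key intertwining of squares
  have hkey : B ∘L (DB ∘L DB) = (DBs ∘L DBs) ∘L B := by
    rw [hDBsq, hDBssq]
    ext x
    simp
  have hkeyx : ∀ x, B (DB (DB x)) = DBs (DBs (B x)) := by
    intro x
    have := ContinuousLinearMap.ext_iff.mp hkey x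
    simpa using this
  -- product space setup
  let e := WithLp.prodContinuousLinearEquiv 2 ℂ H1 H2
  let P : WithLp 2 (H1 × H2) →L[ℂ] WithLp 2 (H1 × H2) :=
    (e.symm : H1 × H2 →L[ℂ] WithLp 2 (H1 × H2)) ∘L
      ((DB.prodMap DBs) ∘L (e : WithLp 2 (H1 × H2) →L[ℂ] H1 × H2))
  let S : WithLp 2 (H1 × H2) →L[ℂ] WithLp 2 (H1 × H2) :=
    (e.symm : H1 × H2 →L[ℂ] WithLp 2 (H1 × H2)) ∘L
      (((0 : H1 × H2 →L[ℂ] H1).prod (B ∘L ContinuousLinearMap.fst ℂ H1 H2)) ∘L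
        (e : WithLp 2 (H1 × H2) →L[ℂ] H1 × H2))
  have hPf : ∀ z : WithLp 2 (H1 × H2), (P z).fst = DB z.fst := fun z => rfl
  have hPs : ∀ z : WithLp 2 (H1 × H2), (P z).snd = DBs z.snd := fun z => rfl
  have hSf : ∀ z : WithLp 2 (H1 × H2), (S z).fst = 0 := fun z => rfl
  have hSs : ∀ z : WithLp 2 (H1 × H2), (S z).snd = B z.fst := fun z => rfl
  have hext : ∀ a b : WithLp 2 (H1 × H2), a.fst = b.fst → a.snd = b.snd → a = b := by
    intro a b h1 h2
    apply e.injective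
    apply Prod.ext <;> simpa
  -- P is positive
  have hDBsym := isSelfAdjoint_iff_isSymmetric.mp hDBp.isSelfAdjoint
  have hDBssym := isSelfAdjoint_iff_isSymmetric.mp hDBsp.isSelfAdjoint
  have hPp : P.IsPositive := by
    constructor
    · intro x y
      show (inner ℂ (P x) y : ℂ) = inner ℂ x (P y)
      rw [WithLp.prod_inner_apply, WithLp.prod_inner_apply]
      exact congrArg₂ (· + ·) (hDBsym x.fst y.fst) (hDBssym x.snd y.snd)
    · intro x
      rw [ContinuousLinearMap.reApplyInnerSelf]
      rw [WithLp.prod_inner_apply, map_add]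
      exact add_nonneg (hDBp.re_inner_nonneg_left x.fst) (hDBsp.re_inner_nonneg_left x.snd)
  have hPpos : 0 ≤ P := (ContinuousLinearMap.nonneg_iff_isPositive P).mpr hPp
  have hPsqpos : 0 ≤ P * P := by
    have := star_mul_self_nonneg P
    rwa [hPp.isSelfAdjoint.star_eq] at this
  have hcomm : S * (P * P) = (P * P) * S := by
    simp only [ContinuousLinearMap.mul_def]
    ext z
    apply hext
    · simp only [ContinuousLinearMap.comp_apply, hSf, hPf]
      simp
    · simp only [ContinuousLinearMap.comp_apply, hSf, hPf, hSs, hPs]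
      exact hkeyx z.fst
  have hPsqrt : CFC.sqrt (P * P) = P := CFC.sqrt_unique rfl hPpos
  have hSP : S * P = P * S := by
    have := my_commute_sqrt (P * P) S hPsqpos hcomm
    rwa [hPsqrt] at this
  -- extract the intertwining
  have hint : ∀ x : H1, B (DB x) = DBs (B x) := by
    intro x
    have hz := ContinuousLinearMap.ext_iff.mp hSP
      ((e.symm : H1 × H2 →L[ℂ] WithLp 2 (H1 × H2)) (x, 0))
    have h2 := congrArg WithLp.snd hz
    simp only [ContinuousLinearMap.mul_apply] at h2
    rw [hSs, hPs, hSs, hPf] at h2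
    exact h2
  -- adjoint of hX
  have hAadj : adjoint A = adjoint B + DB ∘L (adjoint X ∘L DBs) := by
    have h := congrArg (fun T => ContinuousLinearMap.adjoint T) hX
    simp only [map_sub, adjoint_comp, hDBsa, hDBssa] at h
    rw [sub_eq_iff_eq_add] at h
    rw [h]
    ext x
    simp only [ContinuousLinearMap.add_apply, ContinuousLinearMap.comp_apply]
    abel
  have hDB2 : ∀ x : H1, DB (DB x) = x - adjoint B (B x) := by
    intro x
    have := ContinuousLinearMap.ext_iff.mp hDBsq x
    simpa using this
  constructor
  · ext x
    simp only [ContinuousLinearMap.comp_apply, ContinuousLinearMap.sub_apply,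
      ContinuousLinearMap.one_apply]
    rw [hAadj]
    simp only [ContinuousLinearMap.add_apply, ContinuousLinearMap.comp_apply]
    rw [hint x, map_sub, hDB2 x]
    abel
  · have h1 : ‖(1 : H1 →L[ℂ] H1)‖ ≤ 1 := by
      rw [ContinuousLinearMap.one_def]
      exact ContinuousLinearMap.norm_id_le
    have h2 : ‖adjoint X ∘L B‖ ≤ ‖adjoint X‖ * ‖B‖ := ContinuousLinearMap.opNorm_comp_le _ _
    have h3 : ‖adjoint X‖ = ‖X‖ := ContinuousLinearMap.adjoint.norm_map X
    have h4 : ‖adjoint X‖ * ‖B‖ ≤ ‖X‖ := by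
      rw [h3]
      exact mul_le_of_le_one_right (norm_nonneg X) hB
    calc ‖(1 : H1 →L[ℂ] H1) - adjoint X ∘L B‖ ≤ ‖(1 : H1 →L[ℂ] H1)‖ + ‖adjoint X ∘L B‖ :=
          norm_sub_le _ _
      _ ≤ 1 + ‖X‖ := by linarith
end
end

section
/- Let A, B be contractions from H1 to H2 with A ≺ B. Then closure(Ran D_A) ⊆ closure(Ran D_B), and A and B agree on the orthogonal complement of closure(Ran D_B). -/
open ContinuousLinearMap Complex
open scoped InnerProductSpace

noncomputable section

variable {H1 H2 : Type*}
  [NormedAddCommGroup H1] [InnerProductSpace ℂ H1] [CompleteSpace H1]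
  [NormedAddCommGroup H2] [InnerProductSpace ℂ H2] [CompleteSpace H2]

theorem stmt11 (A B : H1 →L[ℂ] H2) (hA : ‖A‖ ≤ 1) (hB : ‖B‖ ≤ 1)
    (DA : H1 →L[ℂ] H1) (hDApos : 0 ≤ DA) (hDAsq : DA ∘L DA = 1 - adjoint A ∘L A)
    (DB : H1 →L[ℂ] H1) (hDBpos : 0 ≤ DB) (hDBsq : DB ∘L DB = 1 - adjoint B ∘L B)
    (DBs : H2 →L[ℂ] H2) (hDBspos : 0 ≤ DBs) (hDBssq : DBs ∘L DBs = 1 - B ∘L adjoint B)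
    (X : H1 →L[ℂ] H2) (hX : A - B = DBs ∘L X ∘L DB) :
    closure (Set.range DA) ⊆ closure (Set.range DB) ∧
      ∀ x ∈ ((LinearMap.range (DB : H1 →ₗ[ℂ] H1)).topologicalClosure)ᗮ, A x = B x := by
  rw [ContinuousLinearMap.nonneg_iff_isPositive] at hDApos hDBpos
  have haA : ContinuousLinearMap.adjoint DA = DA :=
    (ContinuousLinearMap.star_eq_adjoint DA).symm.trans hDApos.isSelfAdjoint
  have haB : ContinuousLinearMap.adjoint DB = DB :=
    (ContinuousLinearMap.star_eq_adjoint DB).symm.trans hDBpos.isSelfAdjoint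
  -- vectors orthogonal to the range of DB are killed by DB
  have hker : ∀ w : H1, w ∈ (LinearMap.range (DB : H1 →ₗ[ℂ] H1))ᗮ → DB w = 0 := by
    intro w hw
    have h0 : ⟪DB (DB w), w⟫_ℂ = 0 := hw (DB (DB w)) ⟨DB w, rfl⟩
    have h1 : ⟪DB w, DB w⟫_ℂ = 0 := by
      rw [← haB, ContinuousLinearMap.adjoint_inner_left, haB] at h0
      exact h0
    exact inner_self_eq_zero.mp h1
  -- if DB w = 0 then A w = B w
  have hAB : ∀ w : H1, DB w = 0 → A w = B w := by
    intro w hw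
    have := congrArg (fun T : H1 →L[ℂ] H2 => T w) hX
    simp only [ContinuousLinearMap.sub_apply, ContinuousLinearMap.comp_apply, hw,
      map_zero] at this
    exact sub_eq_zero.mp this
  -- if DB w = 0 then DA w = 0
  have hDA0 : ∀ w : H1, DB w = 0 → DA w = 0 := by
    intro w hw
    have hB0 : ⟪B w, B w⟫_ℂ = ⟪w, w⟫_ℂ := by
      have := congrArg (fun T : H1 →L[ℂ] H1 => ⟪T w, w⟫_ℂ) hDBsq
      simp only [ContinuousLinearMap.comp_apply, hw, map_zero, inner_zero_left,
        ContinuousLinearMap.sub_apply, ContinuousLinearMap.one_apply,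
        inner_sub_left, ContinuousLinearMap.adjoint_inner_left] at this
      exact (sub_eq_zero.mp this.symm).symm
    have hAw : A w = B w := hAB w hw
    have hDAw : ⟪DA w, DA w⟫_ℂ = 0 := by
      have := congrArg (fun T : H1 →L[ℂ] H1 => ⟪T w, w⟫_ℂ) hDAsq
      simp only [ContinuousLinearMap.comp_apply, ContinuousLinearMap.sub_apply,
        ContinuousLinearMap.one_apply, inner_sub_left,
        ContinuousLinearMap.adjoint_inner_left] at this
      have key : ⟪DA (DA w), w⟫_ℂ = ⟪DA w, DA w⟫_ℂ := by
        rw [← haA, ContinuousLinearMap.adjoint_inner_left, haA]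
      rw [← key, this, hAw, hB0, sub_self]
    exact inner_self_eq_zero.mp hDAw
  constructor
  · have hclosed : IsClosed (((LinearMap.range (DB : H1 →ₗ[ℂ] H1)).topologicalClosure : Submodule ℂ H1) : Set H1) :=
      (LinearMap.range (DB : H1 →ₗ[ℂ] H1)).isClosed_topologicalClosure
    have hsub : Set.range DA ⊆ ((LinearMap.range (DB : H1 →ₗ[ℂ] H1)).topologicalClosure : Set H1) := by
      rintro _ ⟨y, rfl⟩
      rw [← Submodule.orthogonal_orthogonal_eq_closure]
      intro w hw
      have h1 : DA w = 0 := hDA0 w (hker w hw)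
      rw [← haA, ContinuousLinearMap.adjoint_inner_right, h1, inner_zero_left]
    have : closure (Set.range DA) ⊆ ((LinearMap.range (DB : H1 →ₗ[ℂ] H1)).topologicalClosure : Set H1) :=
      closure_minimal hsub hclosed
    rwa [Submodule.topologicalClosure_coe, LinearMap.coe_range] at this
  · intro x hx
    have hx' : x ∈ (LinearMap.range (DB : H1 →ₗ[ℂ] H1))ᗮ :=
      Submodule.orthogonal_le (LinearMap.range (DB : H1 →ₗ[ℂ] H1)).le_topologicalClosure hx
    exact hAB x (hker x hx')
end
end

section
/- Let B be a strict contraction from H1 to H2 and C a contraction with B ≺ C, i.e., B - C = D_{C*}XD_C for some bounded X. Then ‖C‖ < 1. -/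
open ContinuousLinearMap Complex

noncomputable section

variable {H1 H2 : Type*}
  [NormedAddCommGroup H1] [InnerProductSpace ℂ H1] [CompleteSpace H1]
  [NormedAddCommGroup H2] [InnerProductSpace ℂ H2] [CompleteSpace H2]

theorem stmt14 (B C : H1 →L[ℂ] H2) (hB : ‖B‖ < 1) (hC : ‖C‖ ≤ 1)
    (DC : H1 →L[ℂ] H1) (hDCpos : 0 ≤ DC) (hDCsq : DC ∘L DC = 1 - adjoint C ∘L C)
    (DCs : H2 →L[ℂ] H2) (hDCspos : 0 ≤ DCs) (hDCssq : DCs ∘L DCs = 1 - C ∘L adjoint C)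
    (X : H1 →L[ℂ] H2) (hX : B - C = DCs ∘L X ∘L DC) : ‖C‖ < 1 := by
  by_contra h
  push_neg at h
  have hC1 : ‖C‖ = 1 := le_antisymm hC h
  set M := ‖DCs‖ * ‖X‖ with hM
  have hM0 : 0 ≤ M := mul_nonneg (norm_nonneg _) (norm_nonneg _)
  set η := (1 - ‖B‖) / 2 with hη
  have hη0 : 0 < η := by rw [hη]; linarith
  set ε := min η (η ^ 2 / (2 * (M + 1) ^ 2)) with hε
  have hε0 : 0 < ε := lt_min hη0 (by positivity)
  have hεη : ε ≤ η := min_le_left _ _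
  have hεM : ε ≤ η ^ 2 / (2 * (M + 1) ^ 2) := min_le_right _ _
  clear_value M η ε
  clear hε
  obtain ⟨x, hx1, hx2⟩ := C.exists_lt_apply_of_lt_opNorm (r := 1 - ε)
    (by rw [hC1]; linarith)
  have hsa : adjoint DC = DC := ((nonneg_iff_isPositive DC).1 hDCpos).isSelfAdjoint
  -- key norm identity : ‖DC x‖² = ‖x‖² - ‖C x‖²
  have key : ‖DC x‖ ^ 2 = ‖x‖ ^ 2 - ‖C x‖ ^ 2 := by
    have h1 : (inner ℂ (DC x) (DC x) : ℂ) = inner ℂ x ((DC ∘L DC) x) := by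
      rw [comp_apply]
      conv_rhs => rw [← adjoint_inner_left]
      rw [hsa]
    have h2 : (inner ℂ (DC x) (DC x) : ℂ) = inner ℂ x x - inner ℂ (C x) (C x) := by
      rw [h1, hDCsq]
      simp only [sub_apply, ContinuousLinearMap.one_apply, inner_sub_right, comp_apply,
        adjoint_inner_right]
    have h3 : RCLike.re (inner ℂ (DC x) (DC x) : ℂ) =
        RCLike.re (inner ℂ x x : ℂ) - RCLike.re (inner ℂ (C x) (C x) : ℂ) := by
      rw [h2, map_sub]
    rw [← @norm_sq_eq_re_inner ℂ, ← @norm_sq_eq_re_inner ℂ, ← @norm_sq_eq_re_inner ℂ] at h3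
    exact h3
  have hη1 : η ≤ 1 := by rw [hη]; linarith [norm_nonneg B]
  have h1ε : 0 ≤ 1 - ε := by linarith
  have hDCx2 : ‖DC x‖ ^ 2 < 2 * ε := by
    have hCx2 : (1 - ε) ^ 2 < ‖C x‖ ^ 2 := by
      exact pow_lt_pow_left₀ hx2 h1ε two_ne_zero
    have hx2' : ‖x‖ ^ 2 ≤ 1 := by
      have := pow_le_pow_left₀ (norm_nonneg x) hx1.le 2
      simpa using this
    have hexp : (1 - ε) ^ 2 = 1 - 2 * ε + ε ^ 2 := by ring
    have hε2 : 0 ≤ ε ^ 2 := sq_nonneg ε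
    linarith
  -- M * ‖DC x‖ ≤ η
  have hMη : M * ‖DC x‖ ≤ η := by
    have hsq : (M * ‖DC x‖) ^ 2 ≤ η ^ 2 := by
      have h1 : M ^ 2 * (2 * ε) ≤ η ^ 2 := by
        have h2 : M ^ 2 * (2 * ε) ≤ M ^ 2 * (2 * (η ^ 2 / (2 * (M + 1) ^ 2))) := by
          apply mul_le_mul_of_nonneg_left _ (sq_nonneg M)
          linarith
        have h3 : M ^ 2 * (2 * (η ^ 2 / (2 * (M + 1) ^ 2))) ≤ η ^ 2 := by
          have hMp : (0:ℝ) < (M + 1) ^ 2 := by positivity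
          have heq : M ^ 2 * (2 * (η ^ 2 / (2 * (M + 1) ^ 2)))
              = η ^ 2 * (M ^ 2 / (M + 1) ^ 2) := by
            field_simp
          rw [heq]
          have hle : M ^ 2 / (M + 1) ^ 2 ≤ 1 := by
            rw [div_le_one hMp]
            have : (M + 1) ^ 2 = M ^ 2 + 2 * M + 1 := by ring
            linarith
          calc η ^ 2 * (M ^ 2 / (M + 1) ^ 2) ≤ η ^ 2 * 1 :=
                mul_le_mul_of_nonneg_left hle (sq_nonneg η)
            _ = η ^ 2 := mul_one _
        linarith
      calc (M * ‖DC x‖) ^ 2 = M ^ 2 * ‖DC x‖ ^ 2 := by ring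
        _ ≤ M ^ 2 * (2 * ε) := by
            apply mul_le_mul_of_nonneg_left (le_of_lt hDCx2) (sq_nonneg M)
        _ ≤ η ^ 2 := h1
    have h0 : 0 ≤ M * ‖DC x‖ := mul_nonneg hM0 (norm_nonneg _)
    exact (pow_le_pow_iff_left₀ h0 hη0.le two_ne_zero).1 hsq
  -- lower bound on ‖B x‖
  have hBx : ‖B x‖ ≤ ‖B‖ := by
    calc ‖B x‖ ≤ ‖B‖ * ‖x‖ := B.le_opNorm x
      _ ≤ ‖B‖ * 1 := mul_le_mul_of_nonneg_left (le_of_lt hx1) (norm_nonneg B)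
      _ = ‖B‖ := mul_one _
  have hBeq : B x = C x + DCs (X (DC x)) := by
    have h := congrArg (fun T => T x) hX
    simp only [sub_apply, comp_apply] at h
    exact sub_eq_iff_eq_add'.1 h
  have hlow : 1 - ε - η < ‖B x‖ := by
    have h1 : ‖DCs (X (DC x))‖ ≤ M * ‖DC x‖ := by
      calc ‖DCs (X (DC x))‖ ≤ ‖DCs‖ * ‖X (DC x)‖ := DCs.le_opNorm _
        _ ≤ ‖DCs‖ * (‖X‖ * ‖DC x‖) := by
            apply mul_le_mul_of_nonneg_left (X.le_opNorm _) (norm_nonneg _)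
        _ = M * ‖DC x‖ := by rw [hM]; ring
    have h2 : ‖C x‖ - ‖DCs (X (DC x))‖ ≤ ‖B x‖ := by
      rw [hBeq]
      have h3 := norm_le_add_norm_add (C x) (DCs (X (DC x)))
      linarith
    linarith
  rw [hη] at hlow hεη
  linarith
end
end

section
/- Let A, B be contractions from H1 to H2 such that I - A*B = D_A Ỹ D_B for some bounded operator Ỹ. Then ‖D_A x‖ ≤ 2‖Ỹ‖·‖D_B x‖ for every x ∈ H1; consequently there exists a bounded operator M with D_A = M D_B and ‖M‖ ≤ 2‖Ỹ‖. -/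
open ContinuousLinearMap Complex Topology
open scoped ComplexInnerProductSpace

noncomputable section

variable {H1 H2 : Type*}
  [NormedAddCommGroup H1] [InnerProductSpace ℂ H1] [CompleteSpace H1]
  [NormedAddCommGroup H2] [InnerProductSpace ℂ H2] [CompleteSpace H2]

lemma re_inner_self_eq_norm_sq {H : Type*} [NormedAddCommGroup H] [InnerProductSpace ℂ H]
    (y : H) : (inner ℂ y y : ℂ).re = ‖y‖ ^ 2 := by
  simpa using inner_self_eq_norm_sq (𝕜 := ℂ) y

/-- If `‖T x‖ ≤ c ‖S x‖` for all `x`, then `T` factors as `M ∘ S` with `‖M‖ ≤ c`. -/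
theorem factor_through_s15 (T S : H1 →L[ℂ] H1) (c : ℝ) (hc : 0 ≤ c)
    (h : ∀ x : H1, ‖T x‖ ≤ c * ‖S x‖) :
    ∃ M : H1 →L[ℂ] H1, T = M ∘L S ∧ ‖M‖ ≤ c := by
  -- kernel inclusion
  have hker : LinearMap.ker (S : H1 →ₗ[ℂ] H1) ≤ LinearMap.ker (T : H1 →ₗ[ℂ] H1) := by
    intro x hx
    have hx' : S x = 0 := hx
    have := h x
    rw [hx'] at this
    simp only [norm_zero, mul_zero] at this
    exact norm_le_zero_iff.mp this
  set Srange := LinearMap.range (S : H1 →ₗ[ℂ] H1) with hSrange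
  -- the factor map on the range of S
  let g₀ : Srange →ₗ[ℂ] H1 :=
    ((LinearMap.ker (S : H1 →ₗ[ℂ] H1)).liftQ (T : H1 →ₗ[ℂ] H1) hker) ∘ₗ
      ((S : H1 →ₗ[ℂ] H1).quotKerEquivRange.symm : Srange →ₗ[ℂ] _)
  have hg₀ : ∀ (x : H1) (hx : (S : H1 →ₗ[ℂ] H1) x ∈ Srange), g₀ ⟨(S : H1 →ₗ[ℂ] H1) x, hx⟩ = T x := by
    intro x hx
    have h1 : (S : H1 →ₗ[ℂ] H1).quotKerEquivRange
        (Submodule.Quotient.mk x) = ⟨(S : H1 →ₗ[ℂ] H1) x, hx⟩ :=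
      Subtype.ext ((S : H1 →ₗ[ℂ] H1).quotKerEquivRange_apply_mk x)
    have h2 : (S : H1 →ₗ[ℂ] H1).quotKerEquivRange.symm
        ⟨(S : H1 →ₗ[ℂ] H1) x, hx⟩ = Submodule.Quotient.mk x := by
      rw [← h1]; exact LinearEquiv.symm_apply_apply _ _
    simp only [g₀, LinearMap.comp_apply, LinearEquiv.coe_coe, h2]
    exact Submodule.liftQ_apply _ _ _
  have hg₀bound : ∀ y : Srange, ‖g₀ y‖ ≤ c * ‖y‖ := by
    rintro ⟨y, hy⟩
    obtain ⟨x, rfl⟩ := hy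
    rw [hg₀ x (LinearMap.mem_range_self _ x)]
    exact h x
  let g : Srange →L[ℂ] H1 := g₀.mkContinuous c hg₀bound
  have hg : ∀ (x : H1) (hx : (S : H1 →ₗ[ℂ] H1) x ∈ Srange),
      g ⟨(S : H1 →ₗ[ℂ] H1) x, hx⟩ = T x := hg₀
  have hgnorm : ‖g‖ ≤ c := g₀.mkContinuous_norm_le hc hg₀bound
  -- closure of the range
  set K := Srange.topologicalClosure with hK
  haveI : CompleteSpace K := Srange.isClosed_topologicalClosure.completeSpace_coe
  -- inclusion of the range into its closure
  let e₀ : Srange →ₗ[ℂ] K := Submodule.inclusion Srange.le_topologicalClosure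
  have he₀bound : ∀ y : Srange, ‖e₀ y‖ ≤ 1 * ‖y‖ := by
    intro y; rw [one_mul]; rfl
  let e : Srange →L[ℂ] K := e₀.mkContinuous 1 he₀bound
  have he_norm : ∀ y : Srange, ‖(y : H1)‖ ≤ (1 : NNReal) * ‖e y‖ := by
    intro y; rw [NNReal.coe_one, one_mul]; rfl
  have h_dense : DenseRange e := by
    intro y
    have hy : (y : H1) ∈ closure (Srange : Set H1) := y.2
    have : Set.range e = Subtype.val ⁻¹' (Srange : Set H1) := by
      ext z
      constructor
      · rintro ⟨w, rfl⟩; exact w.2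
      · intro hz; exact ⟨⟨z, hz⟩, rfl⟩
    rw [this]
    have hval : IsInducing (Subtype.val : K → H1) :=
      IsInducing.subtypeVal (t := (K : Set H1))
    rw [hval.closure_eq_preimage_closure_image]
    refine Set.mem_preimage.mpr ?_
    have : Subtype.val '' (Subtype.val ⁻¹' (Srange : Set H1) : Set K) ⊆ (Srange : Set H1) :=
      Set.image_preimage_subset _ _
    have hcl : closure (Subtype.val '' (Subtype.val ⁻¹' (Srange : Set H1) : Set K))
        ⊇ (Srange : Set H1) := by
      intro z hz
      exact subset_closure ⟨⟨z, subset_closure hz⟩, hz, rfl⟩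
    exact closure_minimal hcl isClosed_closure hy
  -- extend g along e
  let M₀ : K →L[ℂ] H1 :=
    g.extend e
  have hM₀norm : ‖M₀‖ ≤ (1 : NNReal) * ‖g‖ := g.opNorm_extend_le h_dense he_norm
  have hM₀ : ∀ y : Srange, M₀ (e y) = g y := fun y =>
    ContinuousLinearMap.extend_eq (f := g) (e := e) h_dense
      (isUniformEmbedding_of_bound e he_norm).isUniformInducing y
  -- final operator
  let M : H1 →L[ℂ] H1 := M₀ ∘L (K.orthogonalProjectionOnto : H1 →L[ℂ] K)
  refine ⟨M, ?_, ?_⟩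
  · ext x
    have hmem : S x ∈ K := Srange.le_topologicalClosure (LinearMap.mem_range_self _ x)
    have hproj : K.orthogonalProjectionOnto (S x) = ⟨S x, hmem⟩ := by
      exact Submodule.orthogonalProjectionOnto_mem_subspace_eq_self (⟨S x, hmem⟩ : K)
    have he : e ⟨(S : H1 →ₗ[ℂ] H1) x, LinearMap.mem_range_self _ x⟩ = ⟨S x, hmem⟩ := rfl
    simp only [M, ContinuousLinearMap.comp_apply]
    rw [hproj, ← he, hM₀, hg]
  · have h1 : ‖(K.orthogonalProjectionOnto : H1 →L[ℂ] K)‖ ≤ 1 := Submodule.orthogonalProjectionOnto_norm_le K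
    have h2 : ‖M₀‖ ≤ 1 * ‖g‖ := by simpa using hM₀norm
    calc ‖M‖ ≤ ‖M₀‖ * ‖(K.orthogonalProjectionOnto : H1 →L[ℂ] K)‖ := opNorm_comp_le _ _
      _ ≤ (1 * ‖g‖) * 1 := mul_le_mul h2 h1 (norm_nonneg (K.orthogonalProjectionOnto)) (by positivity)
      _ ≤ c := by simpa using hgnorm

theorem stmt15 (A B : H1 →L[ℂ] H2) (hA : ‖A‖ ≤ 1) (hB : ‖B‖ ≤ 1)
    (DA : H1 →L[ℂ] H1) (hDApos : 0 ≤ DA) (hDAsq : DA ∘L DA = 1 - adjoint A ∘L A)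
    (DB : H1 →L[ℂ] H1) (hDBpos : 0 ≤ DB) (hDBsq : DB ∘L DB = 1 - adjoint B ∘L B)
    (Yt : H1 →L[ℂ] H1) (hY : 1 - adjoint A ∘L B = DA ∘L Yt ∘L DB) :
    (∀ x : H1, ‖DA x‖ ≤ 2 * ‖Yt‖ * ‖DB x‖) ∧
      ∃ M : H1 →L[ℂ] H1, DA = M ∘L DB ∧ ‖M‖ ≤ 2 * ‖Yt‖ := by
  have hDAsa : IsSelfAdjoint DA :=
    ((ContinuousLinearMap.nonneg_iff_isPositive DA).mp hDApos).isSelfAdjoint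
  have hDBsa : IsSelfAdjoint DB :=
    ((ContinuousLinearMap.nonneg_iff_isPositive DB).mp hDBpos).isSelfAdjoint
  have selfswap : ∀ (D : H1 →L[ℂ] H1), IsSelfAdjoint D → ∀ (u w : H1),
      (inner ℂ (D u) (w) : ℂ) = (inner ℂ (u) (D w) : ℂ) := by
    intro D hD u w
    calc (inner ℂ (D u) (w) : ℂ) = (inner ℂ (adjoint D u) (w) : ℂ) := by rw [hD.adjoint_eq]
      _ = (inner ℂ (u) (D w) : ℂ) := ContinuousLinearMap.adjoint_inner_left D w u
  have key : ∀ x : H1, ‖DA x‖ ≤ 2 * ‖Yt‖ * ‖DB x‖ := by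
    intro x
    have defsq : ∀ (C : H1 →L[ℂ] H2) (D : H1 →L[ℂ] H1), IsSelfAdjoint D →
        D ∘L D = 1 - adjoint C ∘L C → ‖D x‖ ^ 2 = ‖x‖ ^ 2 - ‖C x‖ ^ 2 := by
      intro C D hD hsq
      have h2 : D (D x) = x - adjoint C (C x) := by
        have := congrArg (fun f : H1 →L[ℂ] H1 => f x) hsq
        simpa using this
      have h1 : (inner ℂ (D x) (D x) : ℂ) = (inner ℂ (x) (x) : ℂ) - (inner ℂ (C x) (C x) : ℂ) := by
        rw [selfswap D hD x (D x), h2, inner_sub_right,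
          ContinuousLinearMap.adjoint_inner_right]
      have := congrArg Complex.re h1
      simp only [Complex.sub_re] at this
      rw [re_inner_self_eq_norm_sq, re_inner_self_eq_norm_sq, re_inner_self_eq_norm_sq] at this
      exact this
    have hA2 : ‖DA x‖ ^ 2 = ‖x‖ ^ 2 - ‖A x‖ ^ 2 := defsq A DA hDAsa hDAsq
    have hB2 : ‖DB x‖ ^ 2 = ‖x‖ ^ 2 - ‖B x‖ ^ 2 := defsq B DB hDBsa hDBsq
    have h3 : Complex.re (inner ℂ (DA x) (Yt (DB x)) : ℂ) = ‖x‖ ^ 2 - Complex.re (inner ℂ (A x) (B x) : ℂ) := by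
      have h2 : DA (Yt (DB x)) = x - adjoint A (B x) := by
        have := congrArg (fun f : H1 →L[ℂ] H1 => f x) hY
        simpa using this.symm
      have h1 : (inner ℂ (DA x) (Yt (DB x)) : ℂ) = (inner ℂ (x) (x) : ℂ) - (inner ℂ (A x) (B x) : ℂ) := by
        rw [selfswap DA hDAsa x (Yt (DB x)), h2,
          inner_sub_right, ContinuousLinearMap.adjoint_inner_right]
      have := congrArg Complex.re h1
      simp only [Complex.sub_re] at this
      rw [re_inner_self_eq_norm_sq] at this
      exact this
    have hcross : ‖A x - B x‖ ^ 2 = ‖A x‖ ^ 2 - 2 * Complex.re (inner ℂ (A x) (B x) : ℂ) + ‖B x‖ ^ 2 :=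
      norm_sub_sq (𝕜 := ℂ) (A x) (B x)
    have hb : Complex.re (inner ℂ (DA x) (Yt (DB x)) : ℂ) ≤ ‖DA x‖ * (‖Yt‖ * ‖DB x‖) := by
      refine (re_inner_le_norm (𝕜 := ℂ) _ _).trans ?_
      exact mul_le_mul_of_nonneg_left (Yt.le_opNorm (DB x)) (norm_nonneg _)
    have hs1 : (0:ℝ) ≤ ‖DB x‖ ^ 2 := sq_nonneg _
    have hs2 : (0:ℝ) ≤ ‖A x - B x‖ ^ 2 := sq_nonneg _
    have hsq : ‖DA x‖ * ‖DA x‖ ≤ (2 * ‖Yt‖ * ‖DB x‖) * ‖DA x‖ := by nlinarith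
    rcases eq_or_lt_of_le (norm_nonneg (DA x)) with ht | ht
    · rw [← ht]; positivity
    · exact le_of_mul_le_mul_right hsq ht
  exact ⟨key, factor_through_s15 DA DB (2 * ‖Yt‖) (by positivity) key⟩
end
end

section
/- Let A, B be contractions from H1 to H2 such that A - B = D_{A*} X̃ D_B for some bounded operator X̃. Then ‖D_B x‖ ≤ α‖D_A x‖ for all x ∈ H1, where α = ‖X̃‖ + √(1 + ‖X̃‖²). Consequently there exists a bounded M with D_B = M D_A, ‖M‖ ≤ α, and B - A = D_{A*} X' D_A with X' = -X̃M satisfying ‖X'‖ ≤ ‖X̃‖² + ‖X̃‖√(1 + ‖X̃‖²). -/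
open ContinuousLinearMap Complex

noncomputable section

variable {H1 H2 : Type*}
  [NormedAddCommGroup H1] [InnerProductSpace ℂ H1] [CompleteSpace H1]
  [NormedAddCommGroup H2] [InnerProductSpace ℂ H2] [CompleteSpace H2]

local notation "⟪" x ", " y "⟫" => @inner ℂ _ _ x y

/-- Squared-norm identity for an abstract defect operator. -/
lemma defect_normsq_aux {Ha Hb : Type*} [NormedAddCommGroup Ha] [InnerProductSpace ℂ Ha]
    [CompleteSpace Ha] [NormedAddCommGroup Hb] [InnerProductSpace ℂ Hb] [CompleteSpace Hb]
    (C : Ha →L[ℂ] Hb) (D : Ha →L[ℂ] Ha) (hsa : adjoint D = D)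
    (hsq : D ∘L D = 1 - adjoint C ∘L C) (x : Ha) :
    ‖D x‖ ^ 2 = ‖x‖ ^ 2 - ‖C x‖ ^ 2 := by
  have h : ⟪x, (D ∘L D) x⟫ = ⟪x, ((1 : Ha →L[ℂ] Ha) - adjoint C ∘L C) x⟫ := by rw [hsq]
  simp only [ContinuousLinearMap.comp_apply, ContinuousLinearMap.sub_apply,
    ContinuousLinearMap.one_apply, inner_sub_right] at h
  rw [ContinuousLinearMap.adjoint_inner_right] at h
  have h1 : ⟪x, D (D x)⟫ = ⟪D x, D x⟫ := by
    rw [← ContinuousLinearMap.adjoint_inner_left D (D x) x, hsa]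
  rw [h1] at h
  have h2 := congrArg RCLike.re h
  simp only [map_sub] at h2
  rwa [inner_self_eq_norm_sq, inner_self_eq_norm_sq, inner_self_eq_norm_sq] at h2

/-- A Douglas-type factorization lemma. -/
lemma douglas_factor {H : Type*} [NormedAddCommGroup H] [InnerProductSpace ℂ H]
    [CompleteSpace H] (T S : H →L[ℂ] H) (α : ℝ) (hα : 0 ≤ α)
    (h : ∀ x, ‖T x‖ ≤ α * ‖S x‖) :
    ∃ M : H →L[ℂ] H, T = M ∘L S ∧ ‖M‖ ≤ α := by
  classical
  have hwd : ∀ x y : H, S x = S y → T x = T y := by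
    intro x y hxy
    have h0 : S (x - y) = 0 := by rw [map_sub, hxy, sub_self]
    have hb := h (x - y)
    rw [h0, norm_zero, mul_zero] at hb
    have h1 : T (x - y) = 0 := norm_le_zero_iff.mp hb
    rwa [map_sub, sub_eq_zero] at h1
  set R : Submodule ℂ H := LinearMap.range (S : H →ₗ[ℂ] H) with hR
  have hmem : ∀ x : H, S x ∈ R := fun x => ⟨x, rfl⟩
  choose pick hpick using fun y : R => LinearMap.mem_range.mp y.2
  have hpick' : ∀ y : R, S (pick y) = (y : H) := fun y => hpick y
  let φ₀ : R →ₗ[ℂ] H :=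
    { toFun := fun y => T (pick y)
      map_add' := fun y z => by
        rw [← map_add]
        refine hwd _ _ ?_
        rw [hpick', map_add, hpick', hpick']
        rfl
      map_smul' := fun c y => by
        simp only [RingHom.id_apply]
        rw [← map_smul]
        refine hwd _ _ ?_
        rw [hpick', map_smul, hpick']
        rfl }
  have hφ₀ : ∀ y : R, ‖φ₀ y‖ ≤ α * ‖y‖ := fun y => by
    have hb := h (pick y)
    rw [hpick'] at hb
    exact hb
  let φ : R →L[ℂ] H := φ₀.mkContinuous α hφ₀
  set K : Submodule ℂ H := R.topologicalClosure with hK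
  haveI : CompleteSpace K := R.isClosed_topologicalClosure.completeSpace_coe
  let e₀ : R →ₗ[ℂ] K := Submodule.inclusion R.le_topologicalClosure
  let e : R →L[ℂ] K := e₀.mkContinuous 1 (fun y => by rw [one_mul]; rfl)
  have h_e : ∀ y : R, ‖y‖ ≤ (1 : NNReal) * ‖e y‖ := fun y => by
    rw [NNReal.coe_one, one_mul]
    exact le_of_eq rfl
  have hdense : DenseRange e := by
    have himg : Subtype.val '' Set.range e = (R : Set H) := by
      ext z
      constructor
      · rintro ⟨w, ⟨u, rfl⟩, rfl⟩
        exact u.2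
      · intro hz
        exact ⟨e ⟨z, hz⟩, ⟨⟨z, hz⟩, rfl⟩, rfl⟩
    intro y
    rw [closure_subtype, himg]
    have hy := y.2
    rwa [← SetLike.mem_coe, Submodule.topologicalClosure_coe] at hy
  let g : K →L[ℂ] H :=
    φ.extend e
  refine ⟨g.comp (K.orthogonalProjectionOnto), ?_, ?_⟩
  · ext x
    have hxK : S x ∈ K := R.le_topologicalClosure (hmem x)
    have hproj : K.orthogonalProjectionOnto (S x) = ⟨S x, hxK⟩ :=
      Submodule.orthogonalProjectionOnto_mem_subspace_eq_self (K := K) ⟨S x, hxK⟩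
    have he2 : (⟨S x, hxK⟩ : K) = e ⟨S x, hmem x⟩ := rfl
    calc T x = T (pick ⟨S x, hmem x⟩) := hwd _ _ (hpick' ⟨S x, hmem x⟩).symm
      _ = φ ⟨S x, hmem x⟩ := rfl
      _ = g (e ⟨S x, hmem x⟩) := (ContinuousLinearMap.extend_eq φ hdense (ContinuousLinearMap.isUniformEmbedding_of_bound e h_e).isUniformInducing _).symm
      _ = (g.comp (K.orthogonalProjectionOnto)) (S x) := by
          rw [ContinuousLinearMap.comp_apply, hproj, he2]
  · calc ‖g.comp (K.orthogonalProjectionOnto)‖ ≤ ‖g‖ * ‖K.orthogonalProjectionOnto‖ :=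
          opNorm_comp_le _ _
      _ ≤ ((1 : NNReal) * ‖φ‖) * 1 := by
          refine mul_le_mul ?_ (Submodule.orthogonalProjectionOnto_norm_le K)
            (ContinuousLinearMap.opNorm_nonneg _) ?_
          · exact ContinuousLinearMap.opNorm_extend_le φ hdense h_e
          · positivity
      _ ≤ α := by
          rw [NNReal.coe_one, one_mul, mul_one]
          exact φ₀.mkContinuous_norm_le hα hφ₀

set_option maxHeartbeats 1600000 in
theorem stmt16 (A B : H1 →L[ℂ] H2) (hA : ‖A‖ ≤ 1) (hB : ‖B‖ ≤ 1)
    (DA : H1 →L[ℂ] H1) (hDApos : 0 ≤ DA) (hDAsq : DA ∘L DA = 1 - adjoint A ∘L A)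
    (DAs : H2 →L[ℂ] H2) (hDAspos : 0 ≤ DAs) (hDAssq : DAs ∘L DAs = 1 - A ∘L adjoint A)
    (DB : H1 →L[ℂ] H1) (hDBpos : 0 ≤ DB) (hDBsq : DB ∘L DB = 1 - adjoint B ∘L B)
    (Xt : H1 →L[ℂ] H2) (hXt : A - B = DAs ∘L Xt ∘L DB) :
    (∀ x : H1, ‖DB x‖ ≤ (‖Xt‖ + Real.sqrt (1 + ‖Xt‖ ^ 2)) * ‖DA x‖) ∧
      ∃ M : H1 →L[ℂ] H1, DB = M ∘L DA ∧ ‖M‖ ≤ ‖Xt‖ + Real.sqrt (1 + ‖Xt‖ ^ 2) ∧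
        B - A = DAs ∘L (-(Xt ∘L M)) ∘L DA ∧
        ‖-(Xt ∘L M)‖ ≤ ‖Xt‖ ^ 2 + ‖Xt‖ * Real.sqrt (1 + ‖Xt‖ ^ 2) := by
  have hDAsa : adjoint DA = DA :=
    ((ContinuousLinearMap.nonneg_iff_isPositive DA).mp hDApos).isSelfAdjoint.adjoint_eq
  have hDAssa : adjoint DAs = DAs :=
    ((ContinuousLinearMap.nonneg_iff_isPositive DAs).mp hDAspos).isSelfAdjoint.adjoint_eq
  have hDBsa : adjoint DB = DB :=
    ((ContinuousLinearMap.nonneg_iff_isPositive DB).mp hDBpos).isSelfAdjoint.adjoint_eq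
  set k : ℝ := ‖Xt‖ with hk
  set s : ℝ := Real.sqrt (1 + k ^ 2) with hsdef
  have hk0 : 0 ≤ k := norm_nonneg _
  have hs0 : 0 ≤ s := Real.sqrt_nonneg _
  have hs2 : s ^ 2 = 1 + k ^ 2 := Real.sq_sqrt (by positivity)
  have part1 : ∀ x : H1, ‖DB x‖ ≤ (k + s) * ‖DA x‖ := by
    intro x
    set t : ℝ := ‖DB x‖ with htdef
    set d : ℝ := ‖DA x‖ with hddef
    have ht0 : 0 ≤ t := norm_nonneg _
    have hd0 : 0 ≤ d := norm_nonneg _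
    have h1 : t ^ 2 = ‖x‖ ^ 2 - ‖B x‖ ^ 2 := defect_normsq_aux B DB hDBsa hDBsq x
    have h2 : d ^ 2 = ‖x‖ ^ 2 - ‖A x‖ ^ 2 := defect_normsq_aux A DA hDAsa hDAsq x
    have h3 : ‖DAs (A x)‖ ^ 2 = ‖A x‖ ^ 2 - ‖adjoint A (A x)‖ ^ 2 :=
      defect_normsq_aux (adjoint A) DAs hDAssa
        (by rw [hDAssq, ContinuousLinearMap.adjoint_adjoint]) (A x)
    have h4 : ‖A x‖ ^ 2 ≤ ‖x‖ * ‖adjoint A (A x)‖ := by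
      have e1 : ⟪x, adjoint A (A x)⟫ = ⟪A x, A x⟫ :=
        ContinuousLinearMap.adjoint_inner_right A x (A x)
      have e2 : RCLike.re ⟪A x, A x⟫ = ‖A x‖ ^ 2 := inner_self_eq_norm_sq (A x)
      have e3 := re_inner_le_norm (𝕜 := ℂ) x (adjoint A (A x))
      rw [e1, e2] at e3
      exact e3
    have h5 : ‖DAs (A x)‖ ≤ d := by
      refine le_of_pow_le_pow_left₀ (n := 2) two_ne_zero hd0 ?_
      nlinarith [sq_nonneg (‖x‖ - ‖adjoint A (A x)‖)]
    have hBx : B x = A x - DAs (Xt (DB x)) := by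
      have hx := ContinuousLinearMap.ext_iff.mp hXt x
      simp only [ContinuousLinearMap.sub_apply, ContinuousLinearMap.comp_apply] at hx
      rw [← hx]
      abel
    have h6 : ‖B x‖ ^ 2 =
        ‖A x‖ ^ 2 - 2 * RCLike.re ⟪A x, DAs (Xt (DB x))⟫ + ‖DAs (Xt (DB x))‖ ^ 2 := by
      rw [hBx]
      exact norm_sub_sq (𝕜 := ℂ) _ _
    have h7 : ⟪A x, DAs (Xt (DB x))⟫ = ⟪DAs (A x), Xt (DB x)⟫ := by
      conv_rhs => rw [← hDAssa]
      rw [ContinuousLinearMap.adjoint_inner_left]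
    have h8 : RCLike.re ⟪A x, DAs (Xt (DB x))⟫ ≤ d * (k * t) := by
      rw [h7]
      refine (re_inner_le_norm (𝕜 := ℂ) _ _).trans ?_
      have hXtb : ‖Xt (DB x)‖ ≤ k * t := Xt.le_opNorm (DB x)
      have := mul_le_mul h5 hXtb (norm_nonneg _) hd0
      exact this
    have key : t ^ 2 ≤ d ^ 2 + 2 * (k * d * t) := by
      linarith [h1, h2, h6, h8, sq_nonneg ‖DAs (Xt (DB x))‖]
    by_contra hcon
    push_neg at hcon
    have p1 : 0 < t - k * d - s * d := by nlinarith
    have p2 : 0 < t - k * d + s * d := by nlinarith [mul_nonneg hs0 hd0]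
    have p3 : 0 < (t - k * d - s * d) * (t - k * d + s * d) := mul_pos p1 p2
    have p4 : s ^ 2 * d ^ 2 = (1 + k ^ 2) * d ^ 2 := by rw [hs2]
    nlinarith [key, p3, p4]
  refine ⟨part1, ?_⟩
  have hα : 0 ≤ k + s := by positivity
  obtain ⟨M, hM1, hM2⟩ := douglas_factor DB DA (k + s) hα part1
  refine ⟨M, hM1, hM2, ?_, ?_⟩
  · have e1 : B - A = -(DAs ∘L Xt ∘L DB) := by rw [← hXt, neg_sub]
    rw [e1, hM1, ContinuousLinearMap.neg_comp, ContinuousLinearMap.comp_neg,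
      ContinuousLinearMap.comp_assoc]
  · calc ‖-(Xt ∘L M)‖ = ‖Xt ∘L M‖ := norm_neg _
      _ ≤ ‖Xt‖ * ‖M‖ := opNorm_comp_le _ _
      _ ≤ k * (k + s) := mul_le_mul_of_nonneg_left hM2 hk0
      _ = k ^ 2 + k * s := by ring
end
end

section
/- Let X_t : H → H1 and Y_t : H → H2 for t ∈ (0,1] be bounded operators with X_t*X_t ≥ Y_t*Y_t for all t, and assume X_t → X_1 and Y_t → Y_1 strongly as t ↑ 1. Then there exist contractions Z_t : H1 → H2 with Y_t = Z_t X_t for each t and Z_t w → Z_1 w for every w in the closure of the range of X_1. -/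
open ContinuousLinearMap Complex

noncomputable section

variable {H1 H2 : Type*}
  [NormedAddCommGroup H1] [InnerProductSpace ℂ H1] [CompleteSpace H1]
  [NormedAddCommGroup H2] [InnerProductSpace ℂ H2] [CompleteSpace H2]

lemma douglas_aux {H : Type*} [NormedAddCommGroup H] [InnerProductSpace ℂ H] [CompleteSpace H]
    (A : H →L[ℂ] H1) (B : H →L[ℂ] H2) (hBA : ∀ v, ‖B v‖ ≤ ‖A v‖) :
    ∃ Z : H1 →L[ℂ] H2, ‖Z‖ ≤ 1 ∧ ∀ v, Z (A v) = B v := by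
  classical
  have hker : ∀ v v' : H, A v = A v' → B v = B v' := by
    intro v v' h
    have h2 := hBA (v - v')
    rw [map_sub, map_sub, h, sub_self, norm_zero] at h2
    have h3 := le_antisymm h2 (norm_nonneg _)
    rwa [norm_eq_zero, sub_eq_zero] at h3
  set R : Submodule ℂ H1 := LinearMap.range (A : H →ₗ[ℂ] H1) with hR
  have hmem : ∀ v, A v ∈ R := fun v => LinearMap.mem_range_self (A : H →ₗ[ℂ] H1) v
  have hAchoose : ∀ w : R, A (Exists.choose w.2) = (w : H1) := fun w => w.2.choose_spec
  let f0 : R →ₗ[ℂ] H2 :=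
    { toFun := fun w => B (Exists.choose w.2)
      map_add' := by
        intro w w'
        rw [← map_add]
        apply hker
        rw [hAchoose, map_add, hAchoose, hAchoose]
        rfl
      map_smul' := by
        intro c w
        simp only [RingHom.id_apply]
        rw [← map_smul]
        apply hker
        rw [hAchoose, map_smul, hAchoose]
        rfl }
  have hf0 : ∀ w : R, ‖f0 w‖ ≤ 1 * ‖w‖ := by
    intro w
    have h := hBA (Exists.choose w.2)
    rw [hAchoose] at h
    simpa [f0] using h
  let f1 : R →L[ℂ] H2 := f0.mkContinuous 1 hf0
  set K : Submodule ℂ H1 := R.topologicalClosure with hK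
  let e0 : R →ₗ[ℂ] K := Submodule.inclusion R.le_topologicalClosure
  have he0 : ∀ x : R, ‖e0 x‖ = ‖x‖ := fun x => rfl
  let e : R →L[ℂ] K := e0.mkContinuous 1 (fun x => by rw [he0, one_mul])
  have he : ∀ x : ↥R, ‖x‖ ≤ ((1 : NNReal) : ℝ) * ‖e x‖ := by
    intro x
    rw [NNReal.coe_one, one_mul]
    exact le_of_eq rfl
  have hedense : DenseRange e := by
    intro k
    rw [closure_subtype]
    have himg : (Subtype.val '' Set.range e : Set H1) = (R : Set H1) := by
      ext z
      constructor
      · rintro ⟨y, ⟨x, rfl⟩, rfl⟩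
        exact x.2
      · intro hz
        exact ⟨e ⟨z, hz⟩, ⟨⟨z, hz⟩, rfl⟩, rfl⟩
    rw [himg]
    have hk : (↑k : H1) ∈ (R.topologicalClosure : Set H1) := k.2
    rwa [Submodule.topologicalClosure_coe] at hk
  let g : K →L[ℂ] H2 := f1.extend e
  have hg : ‖g‖ ≤ 1 := by
    have h := f1.opNorm_extend_le hedense he
    have hf1 : ‖f1‖ ≤ 1 := f0.mkContinuous_norm_le zero_le_one hf0
    calc ‖g‖ ≤ ((1:NNReal) : ℝ) * ‖f1‖ := h
    _ ≤ 1 := by simpa using hf1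
  let P : H1 →L[ℂ] K := K.orthogonalProjectionOnto
  refine ⟨g ∘L P, ?_, ?_⟩
  · calc ‖g ∘L P‖ ≤ ‖g‖ * ‖P‖ := opNorm_comp_le _ _
    _ ≤ 1 * 1 := mul_le_mul hg (Submodule.orthogonalProjectionOnto_norm_le K) (norm_nonneg P) zero_le_one
    _ = 1 := one_mul 1
  · intro v
    have hPA : P (A v) = e ⟨A v, hmem v⟩ := by
      apply Subtype.ext
      have := (Submodule.starProjection_eq_self_iff (K := K) (v := A v)).mpr
        (R.le_topologicalClosure (hmem v))
      exact this
    show g (P (A v)) = B v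
    rw [hPA, ContinuousLinearMap.extend_eq f1 hedense
      (ContinuousLinearMap.isUniformEmbedding_of_bound e he).isUniformInducing]
    show B (Exists.choose (hmem v)) = B v
    exact hker _ _ (hAchoose ⟨A v, hmem v⟩)

lemma key_norm {H : Type*} [NormedAddCommGroup H] [InnerProductSpace ℂ H] [CompleteSpace H]
    (A : H →L[ℂ] H1) (B : H →L[ℂ] H2)
    (h : adjoint B ∘L B ≤ adjoint A ∘L A) (v : H) : ‖B v‖ ≤ ‖A v‖ := by
  rw [ContinuousLinearMap.le_def] at h
  have h2 := h.2 v
  have e1 := ContinuousLinearMap.apply_norm_sq_eq_inner_adjoint_left (𝕜 := ℂ) A v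
  have e2 := ContinuousLinearMap.apply_norm_sq_eq_inner_adjoint_left (𝕜 := ℂ) B v
  rw [ContinuousLinearMap.reApplyInnerSelf_apply, ContinuousLinearMap.sub_apply,
    inner_sub_left, map_sub] at h2
  have hsq : ‖B v‖ ^ 2 ≤ ‖A v‖ ^ 2 := by rw [e1, e2]; linarith
  exact le_of_pow_le_pow_left₀ two_ne_zero (norm_nonneg _) hsq

theorem stmt18 {H : Type*} [NormedAddCommGroup H] [InnerProductSpace ℂ H] [CompleteSpace H]
    (X : ℝ → (H →L[ℂ] H1)) (Yf : ℝ → (H →L[ℂ] H2))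
    (hdom : ∀ t ∈ Set.Ioc (0 : ℝ) 1,
      adjoint (Yf t) ∘L Yf t ≤ adjoint (X t) ∘L X t)
    (hXconv : ∀ v : H, Filter.Tendsto (fun t => X t v)
      (nhdsWithin 1 (Set.Ioo (0 : ℝ) 1)) (nhds (X 1 v)))
    (hYconv : ∀ v : H, Filter.Tendsto (fun t => Yf t v)
      (nhdsWithin 1 (Set.Ioo (0 : ℝ) 1)) (nhds (Yf 1 v))) :
    ∃ Z : ℝ → (H1 →L[ℂ] H2),
      (∀ t ∈ Set.Ioc (0 : ℝ) 1, ‖Z t‖ ≤ 1 ∧ Yf t = Z t ∘L X t) ∧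
      ∀ w ∈ closure (Set.range (X 1)), Filter.Tendsto (fun t => Z t w)
        (nhdsWithin 1 (Set.Ioo (0 : ℝ) 1)) (nhds (Z 1 w)) := by
  classical
  have hZex : ∀ t ∈ Set.Ioc (0 : ℝ) 1, ∃ Z : H1 →L[ℂ] H2, ‖Z‖ ≤ 1 ∧ ∀ v, Z (X t v) = Yf t v :=
    fun t ht => douglas_aux (X t) (Yf t) (key_norm _ _ (hdom t ht))
  set Z : ℝ → (H1 →L[ℂ] H2) :=
    fun t => if h : t ∈ Set.Ioc (0 : ℝ) 1 then (hZex t h).choose else 0 with hZ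
  have hZnorm : ∀ t ∈ Set.Ioc (0 : ℝ) 1, ‖Z t‖ ≤ 1 := by
    intro t ht
    rw [hZ]
    simp only [dif_pos ht]
    exact (hZex t ht).choose_spec.1
  have hZapp : ∀ t ∈ Set.Ioc (0 : ℝ) 1, ∀ v, Z t (X t v) = Yf t v := by
    intro t ht v
    rw [hZ]
    simp only [dif_pos ht]
    exact (hZex t ht).choose_spec.2 v
  have h1m : (1 : ℝ) ∈ Set.Ioc (0 : ℝ) 1 := ⟨one_pos, le_refl 1⟩
  refine ⟨Z, fun t ht => ⟨hZnorm t ht, ?_⟩, ?_⟩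
  · ext v
    exact (hZapp t ht v).symm
  · set l := nhdsWithin (1 : ℝ) (Set.Ioo 0 1) with hl
    have hmemIoo : ∀ᶠ t in l, t ∈ Set.Ioo (0 : ℝ) 1 := self_mem_nhdsWithin
    have hrange : ∀ v : H, Filter.Tendsto (fun t => Z t (X 1 v)) l (nhds (Z 1 (X 1 v))) := by
      intro v
      rw [tendsto_iff_norm_sub_tendsto_zero]
      have h1 : Filter.Tendsto (fun t => ‖X 1 v - X t v‖) l (nhds 0) := by
        have := tendsto_iff_norm_sub_tendsto_zero.mp (hXconv v)
        simpa [norm_sub_rev] using this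
      have h2 : Filter.Tendsto (fun t => ‖Yf t v - Yf 1 v‖) l (nhds 0) :=
        tendsto_iff_norm_sub_tendsto_zero.mp (hYconv v)
      have hb : Filter.Tendsto (fun t => ‖X 1 v - X t v‖ + ‖Yf t v - Yf 1 v‖) l (nhds 0) := by
        simpa using h1.add h2
      refine squeeze_zero' (Filter.Eventually.of_forall fun t => norm_nonneg _) ?_ hb
      filter_upwards [hmemIoo] with t ht
      have htIoc : t ∈ Set.Ioc (0 : ℝ) 1 := Set.Ioo_subset_Ioc_self ht
      have e1 : Z t (X t v) = Yf t v := hZapp t htIoc v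
      have e2 : Z 1 (X 1 v) = Yf 1 v := hZapp 1 h1m v
      calc ‖Z t (X 1 v) - Z 1 (X 1 v)‖
          ≤ ‖Z t (X 1 v) - Z t (X t v)‖ + ‖Z t (X t v) - Z 1 (X 1 v)‖ :=
            norm_sub_le_norm_sub_add_norm_sub _ _ _
        _ ≤ ‖X 1 v - X t v‖ + ‖Yf t v - Yf 1 v‖ := by
            gcongr
            · rw [← map_sub]
              calc ‖Z t (X 1 v - X t v)‖ ≤ ‖Z t‖ * ‖X 1 v - X t v‖ := le_opNorm _ _
                _ ≤ 1 * ‖X 1 v - X t v‖ := by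
                    gcongr
                    exact hZnorm t htIoc
                _ = ‖X 1 v - X t v‖ := one_mul _
            · rw [e1, e2]
    intro w hw
    rw [Metric.tendsto_nhds]
    intro ε hε
    obtain ⟨u, hu, hdu⟩ := Metric.mem_closure_iff.mp hw (ε / 3) (by linarith)
    obtain ⟨v, rfl⟩ := hu
    filter_upwards [hmemIoo, Metric.tendsto_nhds.mp (hrange v) (ε / 3) (by linarith)]
      with t ht hmid
    have htIoc : t ∈ Set.Ioc (0 : ℝ) 1 := Set.Ioo_subset_Ioc_self ht
    have hzt := hZnorm t htIoc
    have hz1 := hZnorm 1 h1m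
    have hcontr : ∀ (s : ℝ), s ∈ Set.Ioc (0:ℝ) 1 → dist (Z s w) (Z s (X 1 v)) ≤ dist w (X 1 v) := by
      intro s hs
      rw [dist_eq_norm, dist_eq_norm, ← map_sub]
      calc ‖Z s (w - X 1 v)‖ ≤ ‖Z s‖ * ‖w - X 1 v‖ := le_opNorm _ _
        _ ≤ 1 * ‖w - X 1 v‖ := by gcongr; exact hZnorm s hs
        _ = ‖w - X 1 v‖ := one_mul _
    calc dist (Z t w) (Z 1 w)
        ≤ dist (Z t w) (Z t (X 1 v)) + dist (Z t (X 1 v)) (Z 1 (X 1 v))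
            + dist (Z 1 (X 1 v)) (Z 1 w) := dist_triangle4 _ _ _ _
      _ < ε / 3 + ε / 3 + ε / 3 := by
          have ha : dist (Z t w) (Z t (X 1 v)) < ε / 3 := lt_of_le_of_lt (hcontr t htIoc) hdu
          have hb : dist (Z 1 (X 1 v)) (Z 1 w) < ε / 3 := by
            rw [dist_comm]
            exact lt_of_le_of_lt (hcontr 1 h1m) hdu
          linarith [hmid]
      _ = ε := by ring
end
end
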